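/- arXiv:1406.3077 — 2 statements merged into one kernel-verified Lean document; each statement's English description precedes it below -/
import Mathlib

section
/- Let f(n) denote the maximum number of sets of cardinality at least 2 in a 2-laminar family of subsets of [n]. Then limsup_{n→∞} f(n)/binom(n,2) ≤ 1.3821. -/
open Finset

noncomputable def psi (s : ℕ) : ℝ :=
  if s ≤ 2 then 0.3821 else 1.0241 / (2 * (s.choose 2 : ℝ) + 1)

lemma choose2_ge {s : ℕ} (h : 3 ≤ s) : 3 ≤ s.choose 2 :=
  le_trans (by decide : 3 ≤ Nat.choose 3 2) (Nat.choose_le_choose 2 h)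

lemma psi_nonneg (s : ℕ) : 0 ≤ psi s := by
  unfold psi; split
  · norm_num
  · positivity

lemma psi_le (s : ℕ) : psi s ≤ 0.3821 := by
  unfold psi; split
  · exact le_refl _
  · rename_i h
    push_neg at h
    have h3 : (3:ℝ) ≤ (s.choose 2 : ℝ) := by exact_mod_cast choose2_ge h
    rw [div_le_iff₀ (by linarith)]
    nlinarith

lemma psi_eq_of_ge {s : ℕ} (h : 3 ≤ s) :
    psi s = 1.0241 / (2 * (s.choose 2 : ℝ) + 1) := by
  unfold psi; rw [if_neg (by omega)]

lemma psi_harm (s : ℕ) (hs : 2 ≤ s) :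
    1.0241 / (2 * (s.choose 2 : ℝ) + 1) ≤ psi s := by
  rcases eq_or_lt_of_le hs with h2 | h3
  · rw [← h2]; unfold psi; norm_num
  · rw [psi_eq_of_ge h3]

lemma psi_linear (s : ℕ) (hs : 2 ≤ s) :
    0.3821 * (s.choose 2 : ℝ) - ((s.choose 2 : ℝ) - 1) / 2 ≤ psi s := by
  rcases eq_or_lt_of_le hs with h2 | h3
  · rw [← h2]; unfold psi; norm_num
  · rcases eq_or_lt_of_le (by omega : 3 ≤ s) with h3' | h4
    · rw [← h3']; unfold psi; norm_num
    · have h6 : 6 ≤ s.choose 2 :=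
        le_trans (by decide : 6 ≤ Nat.choose 4 2) (Nat.choose_le_choose 2 h4)
      have h6' : (6:ℝ) ≤ (s.choose 2 : ℝ) := by exact_mod_cast h6
      have := psi_nonneg s
      nlinarith

section DBE
variable {α : Type*} [DecidableEq α]

lemma pair_card_le_inter {x y : α} {L L' : Finset α} (hx : x ∈ L) (hy : y ∈ L)
    (hx' : x ∈ L') (hy' : y ∈ L') (hxy : x ≠ y) : 2 ≤ (L ∩ L').card := by
  have h1 : ({x, y} : Finset α) ⊆ L ∩ L' := by
    intro z hz
    simp only [mem_insert, mem_singleton] at hz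
    rcases hz with rfl | rfl <;> simp [mem_inter, *]
  calc 2 = ({x, y} : Finset α).card := (Finset.card_pair hxy).symm
  _ ≤ (L ∩ L').card := Finset.card_le_card h1

lemma debruijn_erdos (S : Finset α) (lines : Finset (Finset α)) (hb : 3 ≤ S.card)
    (hsub : ∀ L ∈ lines, L ⊆ S) (hproper : ∀ L ∈ lines, L ≠ S)
    (hdisj : ∀ L ∈ lines, ∀ L' ∈ lines, L ≠ L' → (L ∩ L').card ≤ 1)
    (hcover : ∀ x ∈ S, ∀ y ∈ S, x ≠ y → ∃ L ∈ lines, x ∈ L ∧ y ∈ L) :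
    S.card ≤ lines.card := by
  classical
  letI : Membership {x // x ∈ S} {l // l ∈ lines} := ⟨fun l p => p.1 ∈ l.1⟩
  have hmem : ∀ (p : {x // x ∈ S}) (l : {l // l ∈ lines}), (p ∈ l) = (p.1 ∈ l.1) :=
    fun p l => rfl
  have key : ∀ p₁ p₂ : {x // x ∈ S}, p₁ ≠ p₂ →
      ∃ l : {l // l ∈ lines}, p₁.1 ∈ l.1 ∧ p₂.1 ∈ l.1 := by
    intro p₁ p₂ h
    obtain ⟨L, hL, h1, h2⟩ := hcover p₁.1 p₁.2 p₂.1 p₂.2 (fun hh => h (Subtype.ext hh))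
    exact ⟨⟨L, hL⟩, h1, h2⟩
  have heqor : ∀ {p₁ p₂ : {x // x ∈ S}} {l₁ l₂ : {l // l ∈ lines}},
      p₁ ∈ l₁ → p₂ ∈ l₁ → p₁ ∈ l₂ → p₂ ∈ l₂ → p₁ = p₂ ∨ l₁ = l₂ := by
    intro p₁ p₂ l₁ l₂ h1 h2 h3 h4
    by_cases hp : p₁ = p₂
    · exact Or.inl hp
    · right
      by_contra hl
      have hne : l₁.1 ≠ l₂.1 := fun hh => hl (Subtype.ext hh)
      have := hdisj l₁.1 l₁.2 l₂.1 l₂.2 hne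
      have h2' := pair_card_le_inter (L := l₁.1) (L' := l₂.1) h1 h2 h3 h4
        (fun hh => hp (Subtype.ext hh))
      omega
  letI HL : Configuration.HasLines {x // x ∈ S} {l // l ∈ lines} :=
    { exists_point := by
        intro l
        have hss : l.1 ⊂ S := Finset.ssubset_iff_subset_ne.mpr ⟨hsub l.1 l.2, hproper l.1 l.2⟩
        obtain ⟨x, hxS, hxl⟩ := Finset.exists_of_ssubset hss
        exact ⟨⟨x, hxS⟩, hxl⟩
      exists_line := by
        intro p
        by_contra hall
        push_neg at hall
        -- every line contains p
        have herase : 2 ≤ (S.erase p.1).card := by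
          have := Finset.card_erase_of_mem p.2
          omega
        obtain ⟨q, hq, r, hr, hqr⟩ := Finset.one_lt_card.mp herase
        have hqS := Finset.mem_of_mem_erase hq
        have hrS := Finset.mem_of_mem_erase hr
        have hqp := Finset.ne_of_mem_erase hq
        have hrp := Finset.ne_of_mem_erase hr
        obtain ⟨L0, hL0, hqL0, hrL0⟩ := hcover q hqS r hrS hqr
        have hSL0 : S ⊆ L0 := by
          intro u huS
          by_cases hup : u = p.1
          · subst hup; exact hall ⟨L0, hL0⟩
          · by_cases huq : u = q
            · subst huq; exact hqL0
            · obtain ⟨L1, hL1, huL1, hqL1⟩ := hcover u huS q hqS huq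
              have hpL1 : p.1 ∈ L1 := hall ⟨L1, hL1⟩
              have hpL0 : p.1 ∈ L0 := hall ⟨L0, hL0⟩
              by_cases hLL : L1 = L0
              · subst hLL; exact huL1
              · have := hdisj L1 hL1 L0 hL0 hLL
                have h2' := pair_card_le_inter (L := L1) (L' := L0) hpL1 hqL1 hpL0 hqL0
                  (Ne.symm hqp)
                omega
        exact hproper L0 hL0 (Finset.Subset.antisymm (hsub L0 hL0) hSL0)
      eq_or_eq := heqor
      mkLine := fun {p₁ p₂} h => (key p₁ p₂ h).choose
      mkLine_ax := fun {p₁ p₂} h => (key p₁ p₂ h).choose_spec }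
  have hcard := Configuration.HasLines.card_le (P := {x // x ∈ S}) (L := {l // l ∈ lines})
  simpa [Fintype.card_coe] using hcard
end DBE

lemma two_mul_choose_two (n : ℕ) : 2 * n.choose 2 = n * (n - 1) := by
  rw [Nat.choose_two_right]
  rcases Nat.even_mul_pred_self n with ⟨c, hc⟩
  omega

section LinSpace
variable {α : Type*} [DecidableEq α]

lemma linspace (S : Finset α) (Max : Finset (Finset α))
    (hb : 3 ≤ S.card)
    (hsub : ∀ M ∈ Max, M ⊆ S) (hproper : ∀ M ∈ Max, M ≠ S)
    (hcard2 : ∀ M ∈ Max, 2 ≤ M.card)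
    (hdisj : ∀ M ∈ Max, ∀ M' ∈ Max, M ≠ M' → (M ∩ M').card ≤ 1)
    (hQ : ∑ M ∈ Max, M.card.choose 2 = S.card.choose 2)
    (hcover : ∀ x ∈ S, ∀ y ∈ S, x ≠ y → ∃ M ∈ Max, x ∈ M ∧ y ∈ M) :
    1 + psi S.card ≤ ∑ M ∈ Max, psi M.card := by
  classical
  have hk : S.card ≤ Max.card := debruijn_erdos S Max hb hsub hproper hdisj hcover
  set b := S.card with hbdef
  set P := b.choose 2 with hPdef
  set k := Max.card with hkdef
  have hQR : ∑ M ∈ Max, ((M.card.choose 2 : ℝ)) = (P : ℝ) := by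
    rw [← hQ]; push_cast; ring
  by_cases hble : b ≤ 7
  · -- small case, linear bound
    have h1 : ∑ M ∈ Max, (0.3821 * (M.card.choose 2 : ℝ) - ((M.card.choose 2 : ℝ) - 1) / 2)
        ≤ ∑ M ∈ Max, psi M.card :=
      Finset.sum_le_sum (fun M hM => psi_linear M.card (hcard2 M hM))
    have h2 : ∑ M ∈ Max, (0.3821 * (M.card.choose 2 : ℝ) - ((M.card.choose 2 : ℝ) - 1) / 2)
        = 0.3821 * (P : ℝ) - ((P : ℝ) - (k : ℝ)) / 2 := by
      have hsum1 : ∑ _M ∈ Max, (1:ℝ) = (k:ℝ) := by simp [hkdef]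
      rw [Finset.sum_sub_distrib, ← Finset.mul_sum, hQR, ← Finset.sum_div,
        Finset.sum_sub_distrib, hQR, hsum1]
    have hbk : (b : ℝ) ≤ (k : ℝ) := by exact_mod_cast hk
    have h3 : 0.3821 * (P : ℝ) - ((P : ℝ) - (b : ℝ)) / 2
        ≤ 0.3821 * (P : ℝ) - ((P : ℝ) - (k : ℝ)) / 2 := by linarith
    have hmain : 1 + psi b ≤ 0.3821 * (P : ℝ) - ((P : ℝ) - (b : ℝ)) / 2 := by
      interval_cases b <;>
        simp only [psi, hPdef] <;> norm_num [Nat.choose_two_right]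
    linarith
  · -- large case, Cauchy-Schwarz
    push_neg at hble
    have hpos : ∀ M ∈ Max, (0:ℝ) < 2 * (M.card.choose 2 : ℝ) + 1 := by
      intro M hM; positivity
    have h1 : ∑ M ∈ Max, (1.0241 / (2 * (M.card.choose 2 : ℝ) + 1))
        ≤ ∑ M ∈ Max, psi M.card :=
      Finset.sum_le_sum (fun M hM => psi_harm M.card (hcard2 M hM))
    have hsed := Finset.sq_sum_div_le_sum_sq_div Max (fun _ => (1:ℝ))
      (g := fun M => 2 * (M.card.choose 2 : ℝ) + 1) hpos
    have hsum : ∑ M ∈ Max, (2 * (M.card.choose 2 : ℝ) + 1) = 2 * (P:ℝ) + (k:ℝ) := by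
      rw [Finset.sum_add_distrib, ← Finset.mul_sum, hQR]
      simp [hkdef]
    have hden : (0:ℝ) < 2 * (P:ℝ) + (k:ℝ) := by
      have : 0 < k := lt_of_lt_of_le (by omega) hk
      have : (0:ℝ) < (k:ℝ) := by exact_mod_cast this
      positivity
    have hknat : 2 * P + k ≤ k * k := by
      have h2P : 2 * P = b * (b - 1) := two_mul_choose_two b
      have hmul : b * (b-1) ≤ k * (k-1) := Nat.mul_le_mul hk (by omega)
      have hkk : k * (k-1) + k = k * k := by
        obtain ⟨n, hn⟩ := Nat.exists_eq_add_of_le (show 1 ≤ k by omega)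
        rw [hn]
        have h1n : 1 + n - 1 = n := by omega
        rw [h1n]
        ring
      omega
    have hCS : (1:ℝ) ≤ ∑ M ∈ Max, 1 / (2 * (M.card.choose 2 : ℝ) + 1) := by
      have hsq : ((k:ℝ))^2 / (2 * (P:ℝ) + (k:ℝ)) ≤ ∑ M ∈ Max, 1 / (2 * (M.card.choose 2 : ℝ) + 1) := by
        have := hsed
        simp only [one_pow] at this
        rw [Finset.sum_const, hsum] at this
        simpa using this
      have hge1 : (1:ℝ) ≤ ((k:ℝ))^2 / (2 * (P:ℝ) + (k:ℝ)) := by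
        rw [le_div_iff₀ hden, one_mul]
        have : (2 * P + k : ℕ) ≤ (k * k : ℕ) := hknat
        have hc : ((2 * P + k : ℕ) : ℝ) ≤ ((k * k : ℕ) : ℝ) := by exact_mod_cast this
        push_cast at hc
        nlinarith
      linarith
    have hlhs : (1.0241 : ℝ) ≤ ∑ M ∈ Max, psi M.card := by
      have : (1.0241 : ℝ) * 1 ≤ 1.0241 * ∑ M ∈ Max, 1 / (2 * (M.card.choose 2 : ℝ) + 1) := by
        apply mul_le_mul_of_nonneg_left hCS (by norm_num)
      rw [Finset.mul_sum] at this
      calc (1.0241 : ℝ) = 1.0241 * 1 := by ring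
      _ ≤ ∑ M ∈ Max, 1.0241 * (1 / (2 * (M.card.choose 2 : ℝ) + 1)) := this
      _ = ∑ M ∈ Max, 1.0241 / (2 * (M.card.choose 2 : ℝ) + 1) := by
          apply Finset.sum_congr rfl; intro M hM; ring
      _ ≤ ∑ M ∈ Max, psi M.card := h1
    have hrhs : 1 + psi b ≤ (1.0241 : ℝ) := by
      have hP28 : 28 ≤ P := by
        calc 28 = Nat.choose 8 2 := by decide
        _ ≤ b.choose 2 := Nat.choose_le_choose 2 (by omega)
      have hP28' : (28:ℝ) ≤ (P:ℝ) := by exact_mod_cast hP28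
      have hpsib : psi b = 1.0241 / (2 * (P:ℝ) + 1) := psi_eq_of_ge (by omega)
      rw [hpsib]
      have hd : (57:ℝ) ≤ 2 * (P:ℝ) + 1 := by linarith
      have : 1.0241 / (2 * (P:ℝ) + 1) ≤ 1.0241 / 57 :=
        div_le_div_of_nonneg_left (by norm_num) (by norm_num) hd
      linarith [this]
    linarith

end LinSpace

section Main
variable {α : Type*} [DecidableEq α]

lemma main_bound (b : ℕ) : ∀ (S : Finset α) (F : Finset (Finset α)),
    S.card = b →
    (∀ A ∈ F, ∀ B ∈ F, 2 ≤ (A ∩ B).card → A ⊆ B ∨ B ⊆ A) →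
    (∀ A ∈ F, 2 ≤ A.card) →
    (∀ A ∈ F, A ⊆ S) →
    (F.card : ℝ) ≤ 1.3821 * (S.card.choose 2 : ℝ) - (if S ∈ F then psi S.card else 0) := by
  induction b using Nat.strong_induction_on with
  | _ b IH =>
  intro S F hSb hlam h2 hsubS
  classical
  set G := if S ∈ F then F.erase S else F with hGdef
  have hGsub : G ⊆ F := by
    rw [hGdef]; split
    · exact Finset.erase_subset _ _
    · exact Finset.Subset.refl F
  have hGne : ∀ A ∈ G, A ≠ S := by
    intro A hA
    rw [hGdef] at hA
    by_cases hin : S ∈ F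
    · rw [if_pos hin] at hA; exact Finset.ne_of_mem_erase hA
    · rw [if_neg hin] at hA; intro h; exact hin (h ▸ hA)
  have hGssub : ∀ A ∈ G, A ⊂ S := fun A hA =>
    Finset.ssubset_iff_subset_ne.mpr ⟨hsubS A (hGsub hA), hGne A hA⟩
  set Mx := G.filter (fun M => ∀ B ∈ G, M ⊆ B → M = B) with hMxdef
  have hMxG : Mx ⊆ G := Finset.filter_subset _ _
  have hMxmax : ∀ M ∈ Mx, ∀ B ∈ G, M ⊆ B → M = B := by
    intro M hM; exact (Finset.mem_filter.mp hM).2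
  have hexmax : ∀ A ∈ G, ∃ M ∈ Mx, A ⊆ M := by
    intro A hA
    set T := G.filter (fun B => A ⊆ B) with hTdef
    have hAT : A ∈ T := Finset.mem_filter.mpr ⟨hA, Finset.Subset.refl A⟩
    obtain ⟨M, hMT, hMmax⟩ := Finset.exists_max_image T (fun B => B.card) ⟨A, hAT⟩
    have hMG : M ∈ G := (Finset.mem_filter.mp hMT).1
    have hAM : A ⊆ M := (Finset.mem_filter.mp hMT).2
    refine ⟨M, Finset.mem_filter.mpr ⟨hMG, ?_⟩, hAM⟩
    intro B hB hMB
    have hBT : B ∈ T := Finset.mem_filter.mpr ⟨hB, hAM.trans hMB⟩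
    exact Finset.eq_of_subset_of_card_le hMB (hMmax B hBT)
  have hMxdisj : ∀ M ∈ Mx, ∀ M' ∈ Mx, M ≠ M' → (M ∩ M').card ≤ 1 := by
    intro M hM M' hM' hne
    by_contra hcon
    push_neg at hcon
    have hl := hlam M (hGsub (hMxG hM)) M' (hGsub (hMxG hM')) (by omega)
    rcases hl with h | h
    · exact hne (hMxmax M hM M' (hMxG hM') h)
    · exact hne ((hMxmax M' hM' M (hMxG hM) h).symm)
  set FM := fun M => G.filter (fun A => A ⊆ M) with hFMdef
  have hGparts : G = Mx.biUnion FM := by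
    apply Finset.Subset.antisymm
    · intro A hA
      obtain ⟨M, hM, hAM⟩ := hexmax A hA
      exact Finset.mem_biUnion.mpr ⟨M, hM, Finset.mem_filter.mpr ⟨hA, hAM⟩⟩
    · intro A hA
      obtain ⟨M, _, hAM⟩ := Finset.mem_biUnion.mp hA
      exact (Finset.mem_filter.mp hAM).1
  have hFMdisj : ∀ M ∈ Mx, ∀ M' ∈ Mx, M ≠ M' → Disjoint (FM M) (FM M') := by
    intro M hM M' hM' hne
    rw [Finset.disjoint_left]
    intro A hA hA'
    have h1 : A ⊆ M := (Finset.mem_filter.mp hA).2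
    have h2' : A ⊆ M' := (Finset.mem_filter.mp hA').2
    have hAG : A ∈ G := (Finset.mem_filter.mp hA).1
    have hsub2 : A ⊆ M ∩ M' := Finset.subset_inter h1 h2'
    have : 2 ≤ (M ∩ M').card :=
      le_trans (h2 A (hGsub hAG)) (Finset.card_le_card hsub2)
    have := hMxdisj M hM M' hM' hne
    omega
  have hcardG : G.card = ∑ M ∈ Mx, (FM M).card := by
    rw [hGparts]; exact Finset.card_biUnion hFMdisj
  have hIH : ∀ M ∈ Mx, ((FM M).card : ℝ) ≤ 1.3821 * (M.card.choose 2 : ℝ) - psi M.card := by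
    intro M hM
    have hMlt : M.card < b := hSb ▸ Finset.card_lt_card (hGssub M (hMxG hM))
    have hMin : M ∈ FM M :=
      Finset.mem_filter.mpr ⟨hMxG hM, Finset.Subset.refl M⟩
    have := IH M.card hMlt M (FM M) rfl
      (fun A hA B hB => hlam A (hGsub ((Finset.filter_subset _ _) hA))
        B (hGsub ((Finset.filter_subset _ _) hB)))
      (fun A hA => h2 A (hGsub ((Finset.filter_subset _ _) hA)))
      (fun A hA => (Finset.mem_filter.mp hA).2)
    rwa [if_pos hMin] at this
  set PM := fun M : Finset α => M.powersetCard 2 with hPMdef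
  have hPMdisjoint : ∀ M ∈ Mx, ∀ M' ∈ Mx, M ≠ M' → Disjoint (PM M) (PM M') := by
    intro M hM M' hM' hne
    rw [Finset.disjoint_left]
    intro e he he'
    have h1 := Finset.mem_powersetCard.mp he
    have h1' := Finset.mem_powersetCard.mp he'
    have hsub2 : e ⊆ M ∩ M' := Finset.subset_inter h1.1 h1'.1
    have : 2 ≤ (M ∩ M').card := by
      have := Finset.card_le_card hsub2
      omega
    have := hMxdisj M hM M' hM' hne
    omega
  have hQcard : ∑ M ∈ Mx, (M.card.choose 2) = (Mx.biUnion PM).card := by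
    rw [Finset.card_biUnion hPMdisjoint]
    apply Finset.sum_congr rfl
    intro M _
    rw [hPMdef]
    exact (Finset.card_powersetCard 2 M).symm
  have hUsub : Mx.biUnion PM ⊆ S.powersetCard 2 := by
    intro e he
    obtain ⟨M, hM, heM⟩ := Finset.mem_biUnion.mp he
    have h1 := Finset.mem_powersetCard.mp heM
    exact Finset.mem_powersetCard.mpr ⟨h1.1.trans (hsubS M (hGsub (hMxG hM))), h1.2⟩
  have hQP : ∑ M ∈ Mx, (M.card.choose 2) ≤ S.card.choose 2 := by
    rw [hQcard, ← Finset.card_powersetCard 2 S]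
    exact Finset.card_le_card hUsub
  have hGcR : (G.card : ℝ) ≤
      1.3821 * ((∑ M ∈ Mx, (M.card.choose 2) : ℕ) : ℝ) - ∑ M ∈ Mx, psi M.card := by
    rw [hcardG]
    push_cast
    rw [Finset.mul_sum, ← Finset.sum_sub_distrib]
    apply Finset.sum_le_sum
    intro M hM
    exact hIH M hM
  have hpsisum_nonneg : (0:ℝ) ≤ ∑ M ∈ Mx, psi M.card :=
    Finset.sum_nonneg (fun M _ => psi_nonneg M.card)
  by_cases hSF : S ∈ F
  · -- S ∈ F
    rw [if_pos hSF]
    have hb2 : 2 ≤ S.card := by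
      have := h2 S hSF
      have := Finset.card_le_card (hsubS S hSF)
      omega
    have hGE : G = F.erase S := by rw [hGdef, if_pos hSF]
    have hGcard1 : G.card + 1 = F.card := by
      rw [hGE, Finset.card_erase_of_mem hSF]
      have hF1 : 1 ≤ F.card := Finset.card_pos.mpr ⟨S, hSF⟩
      omega
    have hcardF : (F.card : ℝ) = (G.card : ℝ) + 1 := by exact_mod_cast hGcard1.symm
    have hP1 : 1 ≤ S.card.choose 2 := by
      calc 1 = Nat.choose 2 2 := by decide
      _ ≤ S.card.choose 2 := Nat.choose_le_choose 2 hb2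
    by_cases hQeq : ∑ M ∈ Mx, (M.card.choose 2) = S.card.choose 2
    · -- linear space case
      have hMxne : Mx.Nonempty := by
        by_contra hcon
        rw [Finset.not_nonempty_iff_eq_empty] at hcon
        rw [hcon, Finset.sum_empty] at hQeq
        omega
      obtain ⟨M0, hM0⟩ := hMxne
      have hb3 : 3 ≤ S.card := by
        have h2M := h2 M0 (hGsub (hMxG hM0))
        have := Finset.card_lt_card (hGssub M0 (hMxG hM0))
        omega
      have hUeq : Mx.biUnion PM = S.powersetCard 2 := by
        apply Finset.eq_of_subset_of_card_le hUsub
        rw [Finset.card_powersetCard, ← hQeq, hQcard]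
      have hcover : ∀ x ∈ S, ∀ y ∈ S, x ≠ y → ∃ M ∈ Mx, x ∈ M ∧ y ∈ M := by
        intro x hx y hy hxy
        have hpair : ({x, y} : Finset α) ∈ S.powersetCard 2 := by
          apply Finset.mem_powersetCard.mpr
          constructor
          · intro z hz
            simp only [Finset.mem_insert, Finset.mem_singleton] at hz
            rcases hz with rfl | rfl
            · exact hx
            · exact hy
          · exact Finset.card_pair hxy
        rw [← hUeq] at hpair
        obtain ⟨M, hM, heM⟩ := Finset.mem_biUnion.mp hpair
        have hsubM := (Finset.mem_powersetCard.mp heM).1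
        exact ⟨M, hM, hsubM (by simp), hsubM (by simp)⟩
      have hlin := linspace S Mx hb3 (fun M hM => hsubS M (hGsub (hMxG hM)))
        (fun M hM => hGne M (hMxG hM)) (fun M hM => h2 M (hGsub (hMxG hM)))
        hMxdisj hQeq hcover
      have hQR : ((∑ M ∈ Mx, (M.card.choose 2) : ℕ) : ℝ) = ((S.card.choose 2 : ℕ) : ℝ) := by
        exact_mod_cast hQeq
      rw [hcardF]
      rw [hQR] at hGcR
      linarith
    · -- strictly fewer pairs
      have hQlt : (∑ M ∈ Mx, (M.card.choose 2)) + 1 ≤ S.card.choose 2 := by omega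
      have hc : ((∑ M ∈ Mx, (M.card.choose 2) : ℕ) : ℝ) + 1 ≤ ((S.card.choose 2 : ℕ) : ℝ) := by
        exact_mod_cast hQlt
      have hps := psi_le S.card
      rw [hcardF]
      linarith
  · -- S ∉ F
    rw [if_neg hSF]
    have hFG : F = G := by rw [hGdef, if_neg hSF]
    have hQR : ((∑ M ∈ Mx, (M.card.choose 2) : ℕ) : ℝ) ≤ ((S.card.choose 2 : ℕ) : ℝ) := by
      exact_mod_cast hQP
    rw [hFG]
    linarith

end Main

/-- `f n` is the maximum number of sets of cardinality at least `2` in a `2`-laminar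
family of subsets of `[n]`. -/
noncomputable def f (n : ℕ) : ℕ :=
  sSup {m | ∃ F : Finset (Finset (Fin n)),
    (∀ A ∈ F, ∀ B ∈ F, 2 ≤ (A ∩ B).card → A ⊆ B ∨ B ⊆ A) ∧
    (∀ A ∈ F, 2 ≤ A.card) ∧ F.card = m}

lemma f_le (n : ℕ) : (f n : ℝ) ≤ 1.3821 * (n.choose 2 : ℝ) := by
  classical
  have hne : {m | ∃ F : Finset (Finset (Fin n)),
      (∀ A ∈ F, ∀ B ∈ F, 2 ≤ (A ∩ B).card → A ⊆ B ∨ B ⊆ A) ∧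
      (∀ A ∈ F, 2 ≤ A.card) ∧ F.card = m}.Nonempty := by
    exact ⟨0, ∅, by simp, by simp, rfl⟩
  have hbdd : BddAbove {m | ∃ F : Finset (Finset (Fin n)),
      (∀ A ∈ F, ∀ B ∈ F, 2 ≤ (A ∩ B).card → A ⊆ B ∨ B ⊆ A) ∧
      (∀ A ∈ F, 2 ≤ A.card) ∧ F.card = m} := by
    refine ⟨Fintype.card (Finset (Fin n)), ?_⟩
    rintro m ⟨F, _, _, hF⟩
    rw [← hF]
    exact Finset.card_le_univ F
  have hmem := Nat.sSup_mem hne hbdd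
  obtain ⟨F, hlam, h2, hcard⟩ := hmem
  have hmb := main_bound (Finset.univ : Finset (Fin n)).card Finset.univ F rfl hlam h2
    (fun A _ => Finset.subset_univ A)
  have hcu : (Finset.univ : Finset (Fin n)).card = n := by
    rw [Finset.card_univ, Fintype.card_fin]
  rw [hcu] at hmb
  have hite : (0:ℝ) ≤ (if (Finset.univ : Finset (Fin n)) ∈ F then psi n else 0) := by
    split
    · exact psi_nonneg n
    · exact le_refl 0
  unfold f
  rw [hcard] at hmb
  linarith

/-- limsup of f(n)/C(n,2) is at most 1.3821. -/
theorem limsup_f_le :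
    Filter.limsup (fun n : ℕ => (f n : ℝ) / (n.choose 2 : ℝ)) Filter.atTop ≤ (1.3821 : ℝ) := by
  apply Filter.limsup_le_of_le
  · apply Filter.isCoboundedUnder_le_of_eventually_le (l := Filter.atTop) (x := 0)
    filter_upwards with n
    positivity
  · filter_upwards [Filter.eventually_ge_atTop 2] with n hn
    have hch1 : 1 ≤ n.choose 2 := by
      calc 1 = Nat.choose 2 2 := by decide
      _ ≤ n.choose 2 := Nat.choose_le_choose 2 hn
    have hch : (0:ℝ) < (n.choose 2 : ℝ) := by
      have : (1:ℝ) ≤ (n.choose 2 : ℝ) := by exact_mod_cast hch1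
      linarith
    rw [div_le_iff₀ hch]
    have := f_le n
    linarith
end

section
/- Let f(n) denote the maximum number of sets of cardinality at least 2 in a 2-laminar family of subsets of [n]. Let F be a 2-laminar family of subsets of [n] all of whose members have cardinality at least 2, let F* be the set of maximal elements (under inclusion) of F \ {[n]}, and for each k let b_k be the number of members of F* of cardinality k. Then |F| ≤ 1 + Σ_{2 ≤ k < n} f(k)·b_k. -/
lemma f_bdd (n : ℕ) : BddAbove {m | ∃ F : Finset (Finset (Fin n)),
    (∀ A ∈ F, ∀ B ∈ F, 2 ≤ (A ∩ B).card → A ⊆ B ∨ B ⊆ A) ∧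
    (∀ A ∈ F, 2 ≤ A.card) ∧ F.card = m} := by
  refine ⟨2 ^ n, fun m hm => ?_⟩
  obtain ⟨F, _, _, hc⟩ := hm
  rw [← hc]
  calc F.card ≤ Fintype.card (Finset (Fin n)) := Finset.card_le_univ F
    _ = 2 ^ n := by simp [Fintype.card_finset]

lemma le_f {k : ℕ} (G : Finset (Finset (Fin k)))
    (hlam : ∀ A ∈ G, ∀ B ∈ G, 2 ≤ (A ∩ B).card → A ⊆ B ∨ B ⊆ A)
    (hcard : ∀ A ∈ G, 2 ≤ A.card) : G.card ≤ f k :=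
  le_csSup (f_bdd k) ⟨G, hlam, hcard, rfl⟩

lemma fiber_le_f {n : ℕ} (S : Finset (Fin n)) (G : Finset (Finset (Fin n)))
    (hsub : ∀ A ∈ G, A ⊆ S)
    (hlam : ∀ A ∈ G, ∀ B ∈ G, 2 ≤ (A ∩ B).card → A ⊆ B ∨ B ⊆ A)
    (hcard : ∀ A ∈ G, 2 ≤ A.card) : G.card ≤ f S.card := by
  classical
  set e := S.equivFin with he
  set φ : Finset (Fin n) → Finset (Fin S.card) :=
    fun A => (S.attach.filter fun x => x.1 ∈ A).image e with hφ
  have hval : ∀ A : Finset (Fin n), A ⊆ S →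
      ((S.attach.filter fun x => x.1 ∈ A).image Subtype.val) = A := by
    intro A hA
    ext a
    simp only [Finset.mem_image, Finset.mem_filter, Finset.mem_attach, true_and]
    constructor
    · rintro ⟨x, hx, rfl⟩; exact hx
    · intro ha; exact ⟨⟨a, hA ha⟩, ha, rfl⟩
  have hcardφ : ∀ A : Finset (Fin n), A ⊆ S → (φ A).card = A.card := by
    intro A hA
    rw [hφ]
    simp only
    conv_lhs => rw [Finset.card_image_of_injective _ e.injective,
      ← Finset.card_image_of_injective _ Subtype.val_injective, hval A hA]
  have hinter : ∀ A B : Finset (Fin n), φ A ∩ φ B = φ (A ∩ B) := by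
    intro A B
    rw [hφ]
    simp only
    rw [← Finset.image_inter _ _ e.injective, ← Finset.filter_and]
    congr 1
    ext x
    simp [and_comm]
  have hmono : ∀ A B : Finset (Fin n), A ⊆ B → φ A ⊆ φ B := by
    intro A B hAB
    apply Finset.image_subset_image
    intro x hx
    simp only [Finset.mem_filter] at hx ⊢
    exact ⟨hx.1, hAB hx.2⟩
  have hinj : ∀ A ∈ G, ∀ B ∈ G, φ A = φ B → A = B := by
    intro A hA B hB hAB
    have h1 : (φ A ∩ φ B).card = (φ A).card := by rw [hAB, Finset.inter_self]
    rw [hinter, hcardφ _ ((Finset.inter_subset_left).trans (hsub A hA)),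
      hcardφ A (hsub A hA)] at h1
    have h2 : A ∩ B = A := Finset.eq_of_subset_of_card_le Finset.inter_subset_left h1.ge
    have h1' : (φ B ∩ φ A).card = (φ B).card := by rw [hAB, Finset.inter_self]
    rw [hinter, hcardφ _ ((Finset.inter_subset_left).trans (hsub B hB)),
      hcardφ B (hsub B hB)] at h1'
    have h2' : B ∩ A = B := Finset.eq_of_subset_of_card_le Finset.inter_subset_left h1'.ge
    exact Finset.Subset.antisymm (h2 ▸ Finset.inter_subset_right)
      (h2' ▸ Finset.inter_subset_right)
  have hGcard : (G.image φ).card = G.card :=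
    Finset.card_image_of_injOn (fun A hA B hB => hinj A hA B hB)
  rw [← hGcard]
  apply le_f
  · intro A' hA' B' hB' hint
    obtain ⟨A, hA, rfl⟩ := Finset.mem_image.mp hA'
    obtain ⟨B, hB, rfl⟩ := Finset.mem_image.mp hB'
    rw [hinter, hcardφ _ ((Finset.inter_subset_left).trans (hsub A hA))] at hint
    rcases hlam A hA B hB hint with h | h
    · exact Or.inl (hmono _ _ h)
    · exact Or.inr (hmono _ _ h)
  · intro A' hA'
    obtain ⟨A, hA, rfl⟩ := Finset.mem_image.mp hA'
    rw [hcardφ A (hsub A hA)]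
    exact hcard A hA

/-- Structural bound: if F is 2-laminar with all members of size ≥ 2 and F* is the set
of maximal elements of F \ {[n]}, with b_k members of cardinality k, then
|F| ≤ 1 + Σ_{2 ≤ k < n} f(k)·b_k. -/
theorem card_le_sum_f_mul (n : ℕ) (F : Finset (Finset (Fin n)))
    (hlam : ∀ A ∈ F, ∀ B ∈ F, 2 ≤ (A ∩ B).card → A ⊆ B ∨ B ⊆ A)
    (hcard : ∀ A ∈ F, 2 ≤ A.card)
    (Fstar : Finset (Finset (Fin n)))
    (hFstar : ∀ A : Finset (Fin n),
      A ∈ Fstar ↔ A ∈ F.erase Finset.univ ∧ ∀ B ∈ F.erase Finset.univ, A ⊆ B → A = B) :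
    F.card ≤ 1 + ∑ k ∈ Finset.Ico 2 n,
      f k * (Fstar.filter (fun A => A.card = k)).card := by
  classical
  set F' := F.erase Finset.univ with hF'
  -- every A ∈ F' is contained in some M ∈ Fstar
  have hexists : ∀ A ∈ F', ∃ M ∈ Fstar, A ⊆ M := by
    intro A hA
    obtain ⟨M, hM, hmax⟩ := Set.Finite.exists_maximalFor (fun B : Finset (Fin n) => B.card)
      {B | B ∈ F' ∧ A ⊆ B} (Set.toFinite _) ⟨A, hA, subset_rfl⟩
    refine ⟨M, (hFstar M).mpr ⟨hM.1, ?_⟩, hM.2⟩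
    intro B hB hMB
    exact Finset.eq_of_subset_of_card_le hMB
      (hmax ⟨hB, hM.2.trans hMB⟩ (Finset.card_le_card hMB))
  -- first step: F.card ≤ 1 + F'.card
  have h1 : F.card ≤ 1 + F'.card := by
    have hsub : F ⊆ insert Finset.univ F' := by
      intro A hA
      by_cases hAu : A = Finset.univ
      · exact Finset.mem_insert.mpr (Or.inl hAu)
      · exact Finset.mem_insert.mpr (Or.inr (Finset.mem_erase.mpr ⟨hAu, hA⟩))
    calc F.card ≤ (insert Finset.univ F').card := Finset.card_le_card hsub
      _ ≤ F'.card + 1 := Finset.card_insert_le _ _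
      _ = 1 + F'.card := by ring
  -- second: F'.card ≤ ∑ over Fstar of fiber cards
  have h2 : F'.card ≤ ∑ M ∈ Fstar, (F'.filter (· ⊆ M)).card := by
    have hsub : F' ⊆ Fstar.biUnion (fun M => F'.filter (· ⊆ M)) := by
      intro A hA
      obtain ⟨M, hM, hAM⟩ := hexists A hA
      exact Finset.mem_biUnion.mpr ⟨M, hM, Finset.mem_filter.mpr ⟨hA, hAM⟩⟩
    calc F'.card ≤ (Fstar.biUnion (fun M => F'.filter (· ⊆ M))).card :=
        Finset.card_le_card hsub
      _ ≤ ∑ M ∈ Fstar, (F'.filter (· ⊆ M)).card := Finset.card_biUnion_le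
  -- each fiber is bounded by f (M.card)
  have h3 : ∀ M ∈ Fstar, (F'.filter (· ⊆ M)).card ≤ f M.card := by
    intro M hM
    apply fiber_le_f M
    · intro A hA; exact (Finset.mem_filter.mp hA).2
    · intro A hA B hB
      exact hlam A (Finset.mem_erase.mp (Finset.mem_filter.mp hA).1).2
        B (Finset.mem_erase.mp (Finset.mem_filter.mp hB).1).2
    · intro A hA
      exact hcard A (Finset.mem_erase.mp (Finset.mem_filter.mp hA).1).2
  -- regrouping the sum by cardinality
  have hmaps : ∀ M ∈ Fstar, M.card ∈ Finset.Ico 2 n := by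
    intro M hM
    obtain ⟨hM1, _⟩ := (hFstar M).mp hM
    obtain ⟨hMne, hMF⟩ := Finset.mem_erase.mp hM1
    refine Finset.mem_Ico.mpr ⟨hcard M hMF, ?_⟩
    have : M ⊂ Finset.univ := Finset.ssubset_univ_iff.mpr hMne
    calc M.card < (Finset.univ : Finset (Fin n)).card := Finset.card_lt_card this
      _ = n := by simp
  have h4 : ∑ M ∈ Fstar, f M.card
      = ∑ k ∈ Finset.Ico 2 n, f k * (Fstar.filter (fun A => A.card = k)).card := by
    rw [← Finset.sum_fiberwise_of_maps_to hmaps (fun M => f M.card)]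
    apply Finset.sum_congr rfl
    intro k _
    calc ∑ M ∈ Fstar.filter (fun A => A.card = k), f M.card
        = ∑ _M ∈ Fstar.filter (fun A => A.card = k), f k :=
          Finset.sum_congr rfl (fun M hM => by rw [(Finset.mem_filter.mp hM).2])
      _ = f k * (Fstar.filter (fun A => A.card = k)).card := by
          rw [Finset.sum_const, smul_eq_mul, mul_comm]
  calc F.card ≤ 1 + F'.card := h1
    _ ≤ 1 + ∑ M ∈ Fstar, (F'.filter (· ⊆ M)).card := by omega
    _ ≤ 1 + ∑ M ∈ Fstar, f M.card := by
        gcongr 1 + ?_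
        exact Finset.sum_le_sum h3
    _ = _ := by rw [h4]
end
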